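/- Let Z follow the k-dimensional extended skew-normal distribution ESN_k(0, Ω̄, α, τ), i.e. with density f(z) = φ_k(z; Ω̄) · Φ(α₀ + αᵀz)/Φ(τ), where Ω̄ is a full-rank correlation matrix, α ∈ ℝᵏ, and α₀ = τ√(1 + αᵀΩ̄α). Then E[ζ₁(α₀ + αᵀZ)] = ζ₁(τ)/√(1 + αᵀΩ̄α), where ζ₁(x) = φ(x)/Φ(x). -/

import Mathlib

open Matrix MeasureTheory Real

noncomputable def phi (x : ℝ) : ℝ := (Real.sqrt (2 * Real.pi))⁻¹ * Real.exp (-x ^ 2 / 2)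

noncomputable def Phi (x : ℝ) : ℝ := ∫ t in Set.Iic x, phi t

noncomputable def zeta1 (x : ℝ) : ℝ := phi x / Phi x

/-- Density of `N_k(0, Ω)`. -/
noncomputable def gaussPdf {k : ℕ} (Ω : Matrix (Fin k) (Fin k) ℝ) (z : Fin k → ℝ) : ℝ :=
  (2 * Real.pi) ^ (-(k : ℝ) / 2) * Ω.det ^ (-(1 : ℝ) / 2) *
    Real.exp (-(1 / 2) * (z ⬝ᵥ Ω⁻¹ *ᵥ z))

/-- Density of `ESN_k(0, Ω̄, α, τ)`. -/
noncomputable def esnPdf {k : ℕ} (Ωb : Matrix (Fin k) (Fin k) ℝ) (α : Fin k → ℝ) (τ : ℝ)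
    (z : Fin k → ℝ) : ℝ :=
  gaussPdf Ωb z * Phi (τ * Real.sqrt (1 + α ⬝ᵥ Ωb *ᵥ α) + α ⬝ᵥ z) / Phi τ

lemma phi_pos (x : ℝ) : 0 < phi x := by
  unfold phi
  positivity

lemma phi_integrable : Integrable phi := by
  have h : Integrable (fun x : ℝ => Real.exp (-(1/2) * x ^ 2)) :=
    integrable_exp_neg_mul_sq (by norm_num)
  have := h.const_mul (Real.sqrt (2 * Real.pi))⁻¹
  convert this using 2 with x
  unfold phi
  ring_nf

lemma Phi_pos (x : ℝ) : 0 < Phi x := by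
  unfold Phi
  rw [setIntegral_pos_iff_support_of_nonneg_ae]
  · have : Function.support phi = Set.univ := by
      ext t; simp [Function.mem_support, (phi_pos t).ne']
    rw [this, Set.univ_inter]
    simp [Real.volume_Iic]
  · exact Filter.Eventually.of_forall fun t => (phi_pos t).le
  · exact phi_integrable.integrableOn


lemma std_gauss_int (k : ℕ) :
    ∫ v : Fin k → ℝ, Real.exp (-(1/2) * (v ⬝ᵥ v)) = Real.sqrt (2 * Real.pi) ^ k := by
  have h : ∀ v : Fin k → ℝ, Real.exp (-(1/2) * (v ⬝ᵥ v)) =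
      ∏ i, Real.exp (-(1/2) * (v i) ^ 2) := by
    intro v
    rw [← Real.exp_sum]
    congr 1
    simp only [dotProduct, Finset.mul_sum, sq]
  simp_rw [h]
  rw [integral_fintype_prod_volume_eq_pow (fun x : ℝ => Real.exp (-(1/2) * x ^ 2))]
  rw [integral_gaussian]
  norm_num
  ring

open scoped MatrixOrder in
lemma gauss_int {k : ℕ} (B : Matrix (Fin k) (Fin k) ℝ) (hB : B.PosDef) :
    ∫ z : Fin k → ℝ, Real.exp (-(1/2) * (z ⬝ᵥ B *ᵥ z)) =
      Real.sqrt (2 * Real.pi) ^ k / Real.sqrt B.det := by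
  have hs : B.PosSemidef := hB.posSemidef
  set C := CFC.sqrt B with hC
  have hCps : C.PosSemidef := (CFC.sqrt_nonneg B).posSemidef
  have hCsym : Cᵀ = C := hCps.1
  have hCC : C * C = B := CFC.sqrt_mul_sqrt_self B hs.nonneg
  have hdetB : 0 < B.det := hB.det_pos
  have hdetC2 : C.det * C.det = B.det := by rw [← det_mul, hCC]
  have hdetC0 : 0 ≤ C.det := by
    rw [hCps.1.det_eq_prod_eigenvalues]
    exact Finset.prod_nonneg fun i _ => hCps.eigenvalues_nonneg i
  have hdetC : C.det = Real.sqrt B.det := by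
    rw [← hdetC2, Real.sqrt_mul_self hdetC0]
  have hdetCne : C.det ≠ 0 := by
    rw [hdetC]; positivity
  -- quadratic form as norm squared
  have hquad : ∀ z : Fin k → ℝ, z ⬝ᵥ B *ᵥ z = (C *ᵥ z) ⬝ᵥ (C *ᵥ z) := by
    intro z
    rw [← hCC, ← mulVec_mulVec, dotProduct_mulVec, ← mulVec_transpose, hCsym]
  simp_rw [hquad]
  have hmap := Real.map_matrix_volume_pi_eq_smul_volume_pi (M := C) hdetCne
  have hint : ∫ z : Fin k → ℝ, Real.exp (-(1/2) * ((C *ᵥ z) ⬝ᵥ (C *ᵥ z))) =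
      ∫ v : Fin k → ℝ, Real.exp (-(1/2) * (v ⬝ᵥ v)) ∂(Measure.map (toLin' C) volume) := by
    rw [integral_map]
    · simp [Matrix.toLin'_apply]
    · exact (Matrix.toLin' C).continuous_of_finiteDimensional.aemeasurable
    · apply Continuous.aestronglyMeasurable
      continuity
  rw [hint, hmap, integral_smul_measure, std_gauss_int]
  rw [ENNReal.toReal_ofReal (by positivity)]
  rw [abs_of_nonneg (by positivity), hdetC]
  rw [smul_eq_mul]
  field_simp


section Alg
variable {k : ℕ}

lemma q_nonneg (Ωb : Matrix (Fin k) (Fin k) ℝ) (hΩ : Ωb.PosDef) (α : Fin k → ℝ) :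
    0 ≤ α ⬝ᵥ Ωb *ᵥ α := by
  have := hΩ.posSemidef.dotProduct_mulVec_nonneg α
  simpa using this

lemma vecMulVec_posSemidef (α : Fin k → ℝ) : (vecMulVec α α).PosSemidef := by
  apply PosSemidef.of_dotProduct_mulVec_nonneg
  · ext i j
    simp [vecMulVec, mul_comm]
  · intro x
    have : star x ⬝ᵥ vecMulVec α α *ᵥ x = (α ⬝ᵥ x) * (α ⬝ᵥ x) := by
      simp only [star_trivial, vecMulVec, dotProduct, mulVec, of_apply, Finset.mul_sum,
        Finset.sum_mul]
      rw [Finset.sum_comm]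
      congr 1 with i
      congr 1 with j
      ring
    rw [this]
    exact mul_self_nonneg _

lemma B_posDef (Ωb : Matrix (Fin k) (Fin k) ℝ) (hΩ : Ωb.PosDef) (α : Fin k → ℝ) :
    (Ωb⁻¹ + vecMulVec α α).PosDef :=
  hΩ.inv.add_posSemidef (vecMulVec_posSemidef α)

lemma B_det (Ωb : Matrix (Fin k) (Fin k) ℝ) (hΩ : Ωb.PosDef) (α : Fin k → ℝ) :
    (Ωb⁻¹ + vecMulVec α α).det = Ωb.det⁻¹ * (1 + α ⬝ᵥ Ωb *ᵥ α) := by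
  have hdet : IsUnit Ωb.det := isUnit_iff_ne_zero.mpr hΩ.det_pos.ne'
  have h2 : Ωb * vecMulVec α α = vecMulVec (Ωb *ᵥ α) α := by
    ext i j
    simp only [vecMulVec, Matrix.mul_apply, mulVec, dotProduct, of_apply, Finset.sum_mul]
    congr 1 with l
    ring
  have h1 : Ωb⁻¹ + vecMulVec α α = Ωb⁻¹ * (1 + vecMulVec (Ωb *ᵥ α) α) := by
    rw [Matrix.mul_add, Matrix.mul_one, ← h2, ← Matrix.mul_assoc,
      Matrix.nonsing_inv_mul _ hdet, Matrix.one_mul]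
  rw [h1, det_mul, det_nonsing_inv, Ring.inverse_eq_inv']
  congr 1
  rw [vecMulVec_eq Unit, det_one_add_replicateCol_mul_replicateRow]
end Alg

lemma vecMulVec_mulVec' {k : ℕ} (α x : Fin k → ℝ) :
    vecMulVec α α *ᵥ x = (α ⬝ᵥ x) • α := by
  ext i
  simp only [vecMulVec, mulVec, dotProduct, of_apply, Pi.smul_apply, smul_eq_mul,
    Finset.sum_mul, Finset.mul_sum]
  congr 1 with j
  ring

lemma complete_square {k : ℕ} (Ωb : Matrix (Fin k) (Fin k) ℝ) (hΩ : Ωb.PosDef)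
    (α : Fin k → ℝ) (τ : ℝ) (z : Fin k → ℝ) :
    z ⬝ᵥ Ωb⁻¹ *ᵥ z + (τ * Real.sqrt (1 + α ⬝ᵥ Ωb *ᵥ α) + α ⬝ᵥ z) ^ 2 =
      ((z - (-(τ * Real.sqrt (1 + α ⬝ᵥ Ωb *ᵥ α)) / (1 + α ⬝ᵥ Ωb *ᵥ α)) • (Ωb *ᵥ α)) ⬝ᵥ
        (Ωb⁻¹ + vecMulVec α α) *ᵥ
        (z - (-(τ * Real.sqrt (1 + α ⬝ᵥ Ωb *ᵥ α)) / (1 + α ⬝ᵥ Ωb *ᵥ α)) • (Ωb *ᵥ α))) + τ ^ 2 := by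
  have hq : 0 ≤ α ⬝ᵥ Ωb *ᵥ α := q_nonneg Ωb hΩ α
  set q := α ⬝ᵥ Ωb *ᵥ α with hqdef
  set s := Real.sqrt (1 + q) with hsdef
  have h1q : (0:ℝ) < 1 + q := by linarith
  have hs2 : s ^ 2 = 1 + q := Real.sq_sqrt h1q.le
  set c := -(τ * s) / (1 + q) with hcdef
  set m : Fin k → ℝ := c • (Ωb *ᵥ α) with hmdef
  set B := Ωb⁻¹ + vecMulVec α α with hBdef
  have hdet : IsUnit Ωb.det := isUnit_iff_ne_zero.mpr hΩ.det_pos.ne'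
  have hinv : Ωb⁻¹ *ᵥ (Ωb *ᵥ α) = α := by
    rw [mulVec_mulVec, Matrix.nonsing_inv_mul _ hdet, one_mulVec]
  have hBm : B *ᵥ m = (-(τ * s)) • α := by
    rw [hmdef, mulVec_smul, hBdef, add_mulVec, hinv, vecMulVec_mulVec']
    have hαΩα : α ⬝ᵥ (Ωb *ᵥ α) = q := rfl
    rw [hαΩα, smul_add, smul_smul]
    rw [← add_smul]
    congr 1
    rw [hcdef]
    field_simp
    ring
  have hBsym : Bᵀ = B := by
    have := (B_posDef Ωb hΩ α).1
    rw [← hBdef] at this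
    simpa using this.eq
  have hzBz : z ⬝ᵥ B *ᵥ z = z ⬝ᵥ Ωb⁻¹ *ᵥ z + (α ⬝ᵥ z) ^ 2 := by
    rw [hBdef, add_mulVec, dotProduct_add, vecMulVec_mulVec', dotProduct_smul]
    rw [smul_eq_mul, dotProduct_comm z α, sq]
  have hzBm : z ⬝ᵥ B *ᵥ m = -(τ * s) * (α ⬝ᵥ z) := by
    rw [hBm, dotProduct_smul, smul_eq_mul, dotProduct_comm z α]
  have hmBz : m ⬝ᵥ B *ᵥ z = -(τ * s) * (α ⬝ᵥ z) := by
    rw [dotProduct_mulVec, ← mulVec_transpose, hBsym, hBm, smul_dotProduct, smul_eq_mul]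
  have hmBm : m ⬝ᵥ B *ᵥ m = (τ * s) ^ 2 * q / (1 + q) := by
    rw [hBm, dotProduct_smul, smul_eq_mul, hmdef, smul_dotProduct, smul_eq_mul]
    have hαΩα : (Ωb *ᵥ α) ⬝ᵥ α = q := by rw [dotProduct_comm]
    rw [hαΩα, hcdef]
    field_simp
  have hexp : (z - m) ⬝ᵥ B *ᵥ (z - m) =
      z ⬝ᵥ B *ᵥ z - z ⬝ᵥ B *ᵥ m - m ⬝ᵥ B *ᵥ z + m ⬝ᵥ B *ᵥ m := by
    rw [mulVec_sub, sub_dotProduct, dotProduct_sub, dotProduct_sub]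
    ring
  have hts : (τ * s) ^ 2 = τ ^ 2 * (1 + q) := by rw [mul_pow, hs2]
  rw [hexp, hzBz, hzBm, hmBz, hmBm]
  field_simp
  nlinarith [hts]

theorem esn_expectation_zeta1 {k : ℕ} (Ωb : Matrix (Fin k) (Fin k) ℝ) (hΩ : Ωb.PosDef)
    (hdiag : ∀ i, Ωb i i = 1) (α : Fin k → ℝ) (τ : ℝ) :
    ∫ z : Fin k → ℝ,
        zeta1 (τ * Real.sqrt (1 + α ⬝ᵥ Ωb *ᵥ α) + α ⬝ᵥ z) * esnPdf Ωb α τ z =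
      zeta1 τ / Real.sqrt (1 + α ⬝ᵥ Ωb *ᵥ α) := by
  have hq : 0 ≤ α ⬝ᵥ Ωb *ᵥ α := q_nonneg Ωb hΩ α
  have h1q : (0:ℝ) < 1 + α ⬝ᵥ Ωb *ᵥ α := by linarith
  have hdet : 0 < Ωb.det := hΩ.det_pos
  set q := α ⬝ᵥ Ωb *ᵥ α with hqdef
  set s := Real.sqrt (1 + q) with hsdef
  have hs : 0 < s := Real.sqrt_pos.mpr h1q
  -- Step 1: simplify the integrand
  have hpt1 : ∀ z : Fin k → ℝ,
      zeta1 (τ * s + α ⬝ᵥ z) * esnPdf Ωb α τ z =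
        gaussPdf Ωb z * phi (τ * s + α ⬝ᵥ z) / Phi τ := by
    intro z
    unfold zeta1 esnPdf
    rw [← hqdef, ← hsdef]
    have h0 : Phi (τ * s + α ⬝ᵥ z) ≠ 0 := (Phi_pos _).ne'
    rw [div_mul_div_comm,
      show phi (τ * s + α ⬝ᵥ z) * (gaussPdf Ωb z * Phi (τ * s + α ⬝ᵥ z)) =
        gaussPdf Ωb z * phi (τ * s + α ⬝ᵥ z) * Phi (τ * s + α ⬝ᵥ z) from by ring,
      mul_comm (Phi (τ * s + α ⬝ᵥ z)) (Phi τ), mul_div_mul_right _ _ h0]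
  simp_rw [hpt1, integral_div]
  -- Step 2: the main Gaussian integral
  have hmain : (∫ z : Fin k → ℝ, gaussPdf Ωb z * phi (τ * s + α ⬝ᵥ z)) = phi τ / s := by
    set B := Ωb⁻¹ + vecMulVec α α with hBdef
    set m : Fin k → ℝ := (-(τ * s) / (1 + q)) • (Ωb *ᵥ α) with hmdef
    set K : ℝ := (2 * Real.pi) ^ (-(k : ℝ) / 2) * Ωb.det ^ (-(1 : ℝ) / 2) *
        (Real.sqrt (2 * Real.pi))⁻¹ * Real.exp (-τ ^ 2 / 2) with hKdef
    have hpt2 : ∀ z : Fin k → ℝ, gaussPdf Ωb z * phi (τ * s + α ⬝ᵥ z) =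
        K * Real.exp (-(1/2) * ((z - m) ⬝ᵥ B *ᵥ (z - m))) := by
      intro z
      have hcs := complete_square Ωb hΩ α τ z
      rw [← hqdef, ← hsdef, ← hmdef, ← hBdef] at hcs
      have hexp : Real.exp (-(1/2) * (z ⬝ᵥ Ωb⁻¹ *ᵥ z)) *
          Real.exp (-(τ * s + α ⬝ᵥ z) ^ 2 / 2) =
          Real.exp (-τ ^ 2 / 2) * Real.exp (-(1/2) * ((z - m) ⬝ᵥ B *ᵥ (z - m))) := by
        rw [← Real.exp_add, ← Real.exp_add]
        congr 1
        linarith [hcs]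
      unfold gaussPdf phi
      rw [hKdef, show (2 * Real.pi) ^ (-(k:ℝ)/2) * Ωb.det ^ (-(1:ℝ)/2) *
          Real.exp (-(1/2) * (z ⬝ᵥ Ωb⁻¹ *ᵥ z)) *
          ((Real.sqrt (2 * Real.pi))⁻¹ * Real.exp (-(τ * s + α ⬝ᵥ z) ^ 2 / 2)) =
          (2 * Real.pi) ^ (-(k:ℝ)/2) * Ωb.det ^ (-(1:ℝ)/2) * (Real.sqrt (2 * Real.pi))⁻¹ *
          (Real.exp (-(1/2) * (z ⬝ᵥ Ωb⁻¹ *ᵥ z)) *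
            Real.exp (-(τ * s + α ⬝ᵥ z) ^ 2 / 2)) from by ring, hexp]
      ring
    simp_rw [hpt2]
    rw [MeasureTheory.integral_const_mul]
    have htr : (∫ z : Fin k → ℝ, Real.exp (-(1/2) * ((z - m) ⬝ᵥ B *ᵥ (z - m)))) =
        ∫ w : Fin k → ℝ, Real.exp (-(1/2) * (w ⬝ᵥ B *ᵥ w)) :=
      integral_sub_right_eq_self (fun w => Real.exp (-(1/2) * (w ⬝ᵥ B *ᵥ w))) m
    rw [htr, gauss_int B (B_posDef Ωb hΩ α)]
    have hdB : B.det = Ωb.det⁻¹ * (1 + q) := B_det Ωb hΩ α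
    have hsdB : Real.sqrt B.det = (Real.sqrt Ωb.det)⁻¹ * s := by
      rw [hdB, Real.sqrt_mul (by positivity), Real.sqrt_inv, hsdef]
    rw [hsdB, hKdef]
    have h1 : (Real.sqrt (2 * Real.pi)) ^ k = (2 * Real.pi) ^ ((k : ℝ)/2) := by
      rw [Real.sqrt_eq_rpow, ← Real.rpow_natCast ((2 * Real.pi) ^ ((1:ℝ)/2)) k,
        ← Real.rpow_mul (by positivity)]
      congr 1
      ring
    have h2 : Ωb.det ^ (-(1:ℝ)/2) = (Real.sqrt Ωb.det)⁻¹ := by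
      rw [Real.sqrt_eq_rpow, ← Real.rpow_neg_one (Ωb.det ^ ((1:ℝ)/2)),
        ← Real.rpow_mul hdet.le]
      congr 1
      ring
    have h3 : (2 * Real.pi) ^ (-(k : ℝ)/2) * (2 * Real.pi) ^ ((k : ℝ)/2) = 1 := by
      rw [← Real.rpow_add (by positivity),
        show -(k:ℝ)/2 + (k:ℝ)/2 = 0 from by ring, Real.rpow_zero]
    rw [h1, h2]
    unfold phi
    have hsD : (0:ℝ) < Real.sqrt Ωb.det := Real.sqrt_pos.mpr hdet
    rw [div_eq_mul_inv ((2 * Real.pi) ^ ((k:ℝ)/2)), mul_inv, inv_inv,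
      div_eq_mul_inv ((Real.sqrt (2 * Real.pi))⁻¹ * Real.exp (-τ ^ 2 / 2))]
    calc (2 * Real.pi) ^ (-(k:ℝ)/2) * (Real.sqrt Ωb.det)⁻¹ * (Real.sqrt (2 * Real.pi))⁻¹ *
          Real.exp (-τ ^ 2 / 2) * ((2 * Real.pi) ^ ((k:ℝ)/2) * (Real.sqrt Ωb.det * s⁻¹))
        = ((2 * Real.pi) ^ (-(k:ℝ)/2) * (2 * Real.pi) ^ ((k:ℝ)/2)) *
          ((Real.sqrt Ωb.det)⁻¹ * Real.sqrt Ωb.det) *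
          ((Real.sqrt (2 * Real.pi))⁻¹ * Real.exp (-τ ^ 2 / 2) * s⁻¹) := by ring
      _ = (Real.sqrt (2 * Real.pi))⁻¹ * Real.exp (-τ ^ 2 / 2) * s⁻¹ := by
          rw [h3, inv_mul_cancel₀ hsD.ne']
          ring
  rw [hmain]
  unfold zeta1
  ring
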